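/- Let (u_{mn}) be a double sequence of real numbers that is Pringsheim convergent to ℓ and satisfies m(u_{mn} − u_{m−1,n}) ≥ −M and n(u_{mn} − u_{m,n−1}) ≥ −M for some M > 0 and all sufficiently large m, n. Then the Cesàro (C,1,1) means σ_{mn} = (1/((m+1)(n+1))) Σ_{i=0}^m Σ_{j=0}^n u_{ij} converge to ℓ in Pringsheim's sense, and conversely, if (σ_{mn}) is Pringsheim convergent to ℓ and the above one-sided Landau conditions hold, then (u_{mn}) is Pringsheim convergent to ℓ. -/

import Mathlib

lemma stmt14aux_tele1 (u : ℕ → ℕ → ℝ) (C : ℝ) (hC : 0 < C) (n₁ : ℕ)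
    (hL : ∀ m n : ℕ, n₁ ≤ m → n₁ ≤ n → (m : ℝ) * (u m n - u (m - 1) n) ≥ -C)
    (m j : ℕ) (hm : n₁ ≤ m) (hj : n₁ ≤ j) :
    ∀ k : ℕ, u m j - u (m + k) j ≤ C * k / (m + 1) := by
  intro k
  induction k with
  | zero => simp
  | succ k ih =>
      have h1 := hL (m + k + 1) j (by omega) hj
      have h2 : u (m + k) j - u (m + k + 1) j ≤ C / (m + k + 1) := by
        have : ((m + k + 1 : ℕ) : ℝ) * (u (m + k + 1) j - u (m + k) j) ≥ -C := by
          have e : (m + k + 1) - 1 = m + k := by omega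
          simpa [e] using h1
        have hpos : (0:ℝ) < ((m + k + 1 : ℕ) : ℝ) := by positivity
        rw [ge_iff_le, neg_le] at this
        have h4 : u (m + k) j - u (m + k + 1) j ≤ C / ((m + k + 1 : ℕ) : ℝ) := by
          rw [le_div_iff₀ hpos]; nlinarith [this]
        push_cast at h4 ⊢
        linarith [h4]
      have h3 : C / (m + k + 1) ≤ C / (m + 1) := by
        apply div_le_div_of_nonneg_left hC.le (by positivity)
        push_cast; linarith
      have : u m j - u (m + k + 1) j ≤ C * k / (m + 1) + C / (m + 1) := by
        have : u m j - u (m+k+1) j = (u m j - u (m+k) j) + (u (m+k) j - u (m+k+1) j) := by ring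
        rw [this]; exact add_le_add ih (h2.trans h3)
      calc u m j - u (m + k + 1) j ≤ C * k / (m + 1) + C / (m + 1) := this
        _ = C * (k + 1) / (m + 1) := by ring
        _ = C * ((k + 1 : ℕ) : ℝ) / (m + 1) := by push_cast; ring

lemma stmt14aux_tele2 (u : ℕ → ℕ → ℝ) (C : ℝ) (hC : 0 < C) (n₁ : ℕ)
    (hL : ∀ m n : ℕ, n₁ ≤ m → n₁ ≤ n → (n : ℝ) * (u m n - u m (n - 1)) ≥ -C)
    (i n : ℕ) (hi : n₁ ≤ i) (hn : n₁ ≤ n) :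
    ∀ k : ℕ, u i n - u i (n + k) ≤ C * k / (n + 1) := by
  have := stmt14aux_tele1 (fun a b => u b a) C hC n₁ (fun a b ha hb => hL b a hb ha) n i hn hi
  simpa using this

lemma stmt14aux_corner_ge (u : ℕ → ℕ → ℝ) (C : ℝ) (hC : 0 < C) (n₁ : ℕ)
    (hL1 : ∀ m n : ℕ, n₁ ≤ m → n₁ ≤ n → (m : ℝ) * (u m n - u (m - 1) n) ≥ -C)
    (hL2 : ∀ m n : ℕ, n₁ ≤ m → n₁ ≤ n → (n : ℝ) * (u m n - u m (n - 1)) ≥ -C)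
    (m n i j : ℕ) (hm : n₁ ≤ m) (hn : n₁ ≤ n) (hi : m ≤ i) (hj : n ≤ j) :
    u m n - u i j ≤ C * ((i : ℝ) - m) / (m + 1) + C * ((j : ℝ) - n) / (n + 1) := by
  have h1 : u m n - u m j ≤ C * ((j : ℝ) - n) / (n + 1) := by
    have := stmt14aux_tele2 u C hC n₁ hL2 m n hm hn (j - n)
    have e : n + (j - n) = j := by omega
    rw [e] at this
    have e2 : ((j - n : ℕ) : ℝ) = (j : ℝ) - n := by
      rw [Nat.cast_sub hj]
    rwa [e2] at this
  have h2 : u m j - u i j ≤ C * ((i : ℝ) - m) / (m + 1) := by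
    have := stmt14aux_tele1 u C hC n₁ hL1 m j hm (le_trans hn hj) (i - m)
    have e : m + (i - m) = i := by omega
    rw [e] at this
    have e2 : ((i - m : ℕ) : ℝ) = (i : ℝ) - m := by
      rw [Nat.cast_sub hi]
    rwa [e2] at this
  linarith

lemma stmt14aux_corner_le (u : ℕ → ℕ → ℝ) (C : ℝ) (hC : 0 < C) (n₁ : ℕ)
    (hL1 : ∀ m n : ℕ, n₁ ≤ m → n₁ ≤ n → (m : ℝ) * (u m n - u (m - 1) n) ≥ -C)
    (hL2 : ∀ m n : ℕ, n₁ ≤ m → n₁ ≤ n → (n : ℝ) * (u m n - u m (n - 1)) ≥ -C)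
    (m n i j : ℕ) (hi : n₁ ≤ i) (hj : n₁ ≤ j) (hm : i ≤ m) (hn : j ≤ n) :
    u i j - u m n ≤ C * ((m : ℝ) - i) / (i + 1) + C * ((n : ℝ) - j) / (j + 1) := by
  have h1 : u i j - u m j ≤ C * ((m : ℝ) - i) / (i + 1) := by
    have := stmt14aux_tele1 u C hC n₁ hL1 i j hi hj (m - i)
    have e : i + (m - i) = m := by omega
    rw [e] at this
    rwa [Nat.cast_sub hm] at this
  have h2 : u m j - u m n ≤ C * ((n : ℝ) - j) / (j + 1) := by
    have := stmt14aux_tele2 u C hC n₁ hL2 m j (le_trans hi hm) hj (n - j)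
    have e : j + (n - j) = n := by omega
    rw [e] at this
    rwa [Nat.cast_sub hn] at this
  linarith

lemma stmt14aux_sum_ico_eq (u : ℕ → ℕ → ℝ) (σ : ℕ → ℕ → ℝ)
    (hσ : ∀ m n : ℕ, σ m n =
      (∑ i ∈ Finset.range (m + 1), ∑ j ∈ Finset.range (n + 1), u i j)
        / (((m : ℝ) + 1) * ((n : ℝ) + 1)))
    (m M n N : ℕ) (h1 : m ≤ M) (h2 : n ≤ N) :
    ∑ i ∈ Finset.Ico (m+1) (M+1), ∑ j ∈ Finset.Ico (n+1) (N+1), u i j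
      = ((M:ℝ)+1)*((N:ℝ)+1)*σ M N - ((m:ℝ)+1)*((N:ℝ)+1)*σ m N
        - ((M:ℝ)+1)*((n:ℝ)+1)*σ M n + ((m:ℝ)+1)*((n:ℝ)+1)*σ m n := by
  have key : ∀ p q : ℕ, ((p:ℝ)+1)*((q:ℝ)+1)*σ p q
      = ∑ i ∈ Finset.range (p + 1), ∑ j ∈ Finset.range (q + 1), u i j := by
    intro p q
    rw [hσ]
    field_simp
  rw [key, key, key, key]
  have hrow : ∀ i, ∑ j ∈ Finset.Ico (n+1) (N+1), u i j
      = ∑ j ∈ Finset.range (N+1), u i j - ∑ j ∈ Finset.range (n+1), u i j := by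
    intro i
    exact Finset.sum_Ico_eq_sub _ (by omega)
  calc ∑ i ∈ Finset.Ico (m+1) (M+1), ∑ j ∈ Finset.Ico (n+1) (N+1), u i j
      = ∑ i ∈ Finset.Ico (m+1) (M+1),
          (∑ j ∈ Finset.range (N+1), u i j - ∑ j ∈ Finset.range (n+1), u i j) := by
        exact Finset.sum_congr rfl (fun i _ => hrow i)
    _ = (∑ i ∈ Finset.Ico (m+1) (M+1), ∑ j ∈ Finset.range (N+1), u i j)
        - ∑ i ∈ Finset.Ico (m+1) (M+1), ∑ j ∈ Finset.range (n+1), u i j := by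
        rw [Finset.sum_sub_distrib]
    _ = _ := by
        rw [Finset.sum_Ico_eq_sub _ (by omega : m+1 ≤ M+1),
            Finset.sum_Ico_eq_sub _ (by omega : m+1 ≤ M+1)]
        ring

lemma stmt14aux_upper_est (u : ℕ → ℕ → ℝ) (σ : ℕ → ℕ → ℝ) (ℓ : ℝ)
    (hσ : ∀ m n : ℕ, σ m n =
      (∑ i ∈ Finset.range (m + 1), ∑ j ∈ Finset.range (n + 1), u i j)
        / (((m : ℝ) + 1) * ((n : ℝ) + 1)))
    (C : ℝ) (hC : 0 < C) (n₁ : ℕ)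
    (hL1 : ∀ m n : ℕ, n₁ ≤ m → n₁ ≤ n → (m : ℝ) * (u m n - u (m - 1) n) ≥ -C)
    (hL2 : ∀ m n : ℕ, n₁ ≤ m → n₁ ≤ n → (n : ℝ) * (u m n - u m (n - 1)) ≥ -C)
    (ε' : ℝ) (hε' : 0 ≤ ε') (n₀' : ℕ)
    (hconv : ∀ p q : ℕ, n₀' ≤ p → n₀' ≤ q → |σ p q - ℓ| ≤ ε')
    (m n M N : ℕ) (hm : n₁ ≤ m) (hn : n₁ ≤ n) (hm' : n₀' ≤ m) (hn' : n₀' ≤ n)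
    (h1 : m < M) (h2 : n < N) :
    u m n ≤ ℓ + ε' * ((((M:ℝ)+1)+((m:ℝ)+1)) * (((N:ℝ)+1)+((n:ℝ)+1)))
        / ((((M:ℝ)-m)) * (((N:ℝ)-n)))
      + (C * ((M:ℝ)-m) / (m+1) + C * ((N:ℝ)-n) / (n+1)) := by
  set δ : ℝ := C * ((M:ℝ)-m) / (m+1) + C * ((N:ℝ)-n) / (n+1) with hδ
  set D : ℝ := (((M:ℝ)-m)) * (((N:ℝ)-n)) with hD
  set K : ℝ := (((M:ℝ)+1)+((m:ℝ)+1)) * (((N:ℝ)+1)+((n:ℝ)+1)) with hK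
  have hMm : (0:ℝ) < (M:ℝ) - m := by
    have : (m:ℝ) < M := by exact_mod_cast h1
    linarith
  have hNn : (0:ℝ) < (N:ℝ) - n := by
    have : (n:ℝ) < N := by exact_mod_cast h2
    linarith
  have hDpos : 0 < D := mul_pos hMm hNn
  set S : ℝ := ∑ i ∈ Finset.Ico (m+1) (M+1), ∑ j ∈ Finset.Ico (n+1) (N+1), u i j with hS
  -- lower bound on S
  have hlow : D * (u m n - δ) ≤ S := by
    have hterm : ∀ i ∈ Finset.Ico (m+1) (M+1), ∀ j ∈ Finset.Ico (n+1) (N+1),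
        u m n - δ ≤ u i j := by
      intro i hi j hj
      rw [Finset.mem_Ico] at hi hj
      have hcg := stmt14aux_corner_ge u C hC n₁ hL1 hL2 m n i j hm hn (by omega) (by omega)
      have b1 : C * ((i:ℝ)-m) / (m+1) ≤ C * ((M:ℝ)-m) / (m+1) := by
        gcongr
        exact_mod_cast Nat.le_of_lt_succ hi.2
      have b2 : C * ((j:ℝ)-n) / (n+1) ≤ C * ((N:ℝ)-n) / (n+1) := by
        gcongr
        exact_mod_cast Nat.le_of_lt_succ hj.2
      rw [hδ]; linarith
    have hinner : ∀ i ∈ Finset.Ico (m+1) (M+1),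
        ((N:ℝ)-n) * (u m n - δ) ≤ ∑ j ∈ Finset.Ico (n+1) (N+1), u i j := by
      intro i hi
      have hcn := Finset.card_nsmul_le_sum (Finset.Ico (n+1) (N+1)) _ _ (hterm i hi)
      rw [Nat.card_Ico, nsmul_eq_mul] at hcn
      have e : ((N + 1 - (n + 1) : ℕ) : ℝ) = (N:ℝ) - n := by
        rw [Nat.cast_sub (by omega)]; push_cast; ring
      rwa [e] at hcn
    have hcm := Finset.card_nsmul_le_sum (Finset.Ico (m+1) (M+1)) _ _ hinner
    rw [Nat.card_Ico, nsmul_eq_mul] at hcm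
    have e : ((M + 1 - (m + 1) : ℕ) : ℝ) = (M:ℝ) - m := by
      rw [Nat.cast_sub (by omega)]; push_cast; ring
    rw [e] at hcm
    calc D * (u m n - δ) = ((M:ℝ)-m) * (((N:ℝ)-n) * (u m n - δ)) := by rw [hD]; ring
      _ ≤ S := hcm
  -- upper bound on S via σ
  have hid := stmt14aux_sum_ico_eq u σ hσ m M n N h1.le h2.le
  have e1 := hconv M N (le_trans hm' (by omega)) (le_trans hn' (by omega))
  have e2 := hconv m N hm' (le_trans hn' (by omega))
  have e3 := hconv M n (le_trans hm' (by omega)) hn'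
  have e4 := hconv m n hm' hn'
  rw [abs_le] at e1 e2 e3 e4
  have p1 : (0:ℝ) ≤ ((M:ℝ)+1)*((N:ℝ)+1) := by positivity
  have p2 : (0:ℝ) ≤ ((m:ℝ)+1)*((N:ℝ)+1) := by positivity
  have p3 : (0:ℝ) ≤ ((M:ℝ)+1)*((n:ℝ)+1) := by positivity
  have p4 : (0:ℝ) ≤ ((m:ℝ)+1)*((n:ℝ)+1) := by positivity
  have q1 : ((M:ℝ)+1)*((N:ℝ)+1) * (σ M N - ℓ) ≤ ((M:ℝ)+1)*((N:ℝ)+1) * ε' :=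
    mul_le_mul_of_nonneg_left e1.2 p1
  have q2 : ((m:ℝ)+1)*((N:ℝ)+1) * (-(σ m N - ℓ)) ≤ ((m:ℝ)+1)*((N:ℝ)+1) * ε' :=
    mul_le_mul_of_nonneg_left (by linarith [e2.1]) p2
  have q3 : ((M:ℝ)+1)*((n:ℝ)+1) * (-(σ M n - ℓ)) ≤ ((M:ℝ)+1)*((n:ℝ)+1) * ε' :=
    mul_le_mul_of_nonneg_left (by linarith [e3.1]) p3
  have q4 : ((m:ℝ)+1)*((n:ℝ)+1) * (σ m n - ℓ) ≤ ((m:ℝ)+1)*((n:ℝ)+1) * ε' :=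
    mul_le_mul_of_nonneg_left e4.2 p4
  have expand : S - D * ℓ
      = ((M:ℝ)+1)*((N:ℝ)+1) * (σ M N - ℓ) + ((m:ℝ)+1)*((N:ℝ)+1) * (-(σ m N - ℓ))
        + ((M:ℝ)+1)*((n:ℝ)+1) * (-(σ M n - ℓ)) + ((m:ℝ)+1)*((n:ℝ)+1) * (σ m n - ℓ) := by
    rw [hS, hid, hD]; ring
  have expand2 : ε' * K
      = ((M:ℝ)+1)*((N:ℝ)+1) * ε' + ((m:ℝ)+1)*((N:ℝ)+1) * ε'
        + ((M:ℝ)+1)*((n:ℝ)+1) * ε' + ((m:ℝ)+1)*((n:ℝ)+1) * ε' := by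
    rw [hK]; ring
  have hup : S ≤ D * ℓ + ε' * K := by linarith
  have hfin : D * (u m n - δ - ℓ) ≤ ε' * K := by
    have : D * (u m n - δ - ℓ) = D * (u m n - δ) - D * ℓ := by ring
    linarith [hlow, hup, this.le, this.ge]
  have hdiv : u m n - δ - ℓ ≤ ε' * K / D := by
    rw [le_div_iff₀ hDpos]
    calc (u m n - δ - ℓ) * D = D * (u m n - δ - ℓ) := by ring
      _ ≤ ε' * K := hfin
  linarith


lemma stmt14aux_lower_est (u : ℕ → ℕ → ℝ) (σ : ℕ → ℕ → ℝ) (ℓ : ℝ)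
    (hσ : ∀ m n : ℕ, σ m n =
      (∑ i ∈ Finset.range (m + 1), ∑ j ∈ Finset.range (n + 1), u i j)
        / (((m : ℝ) + 1) * ((n : ℝ) + 1)))
    (C : ℝ) (hC : 0 < C) (n₁ : ℕ)
    (hL1 : ∀ m n : ℕ, n₁ ≤ m → n₁ ≤ n → (m : ℝ) * (u m n - u (m - 1) n) ≥ -C)
    (hL2 : ∀ m n : ℕ, n₁ ≤ m → n₁ ≤ n → (n : ℝ) * (u m n - u m (n - 1)) ≥ -C)
    (ε' : ℝ) (hε' : 0 ≤ ε') (n₀' : ℕ)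
    (hconv : ∀ p q : ℕ, n₀' ≤ p → n₀' ≤ q → |σ p q - ℓ| ≤ ε')
    (m' n' m n : ℕ) (hm1 : n₁ ≤ m') (hn1 : n₁ ≤ n') (hm' : n₀' ≤ m') (hn' : n₀' ≤ n')
    (h1 : m' < m) (h2 : n' < n) :
    ℓ - ε' * ((((m:ℝ)+1)+((m':ℝ)+1)) * (((n:ℝ)+1)+((n':ℝ)+1)))
        / ((((m:ℝ)-m')) * (((n:ℝ)-n')))
      - (C * ((m:ℝ)-m') / (m'+1) + C * ((n:ℝ)-n') / (n'+1)) ≤ u m n := by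
  set δ : ℝ := C * ((m:ℝ)-m') / (m'+1) + C * ((n:ℝ)-n') / (n'+1) with hδ
  set D : ℝ := (((m:ℝ)-m')) * (((n:ℝ)-n')) with hD
  set K : ℝ := (((m:ℝ)+1)+((m':ℝ)+1)) * (((n:ℝ)+1)+((n':ℝ)+1)) with hK
  have hMm : (0:ℝ) < (m:ℝ) - m' := by
    have : (m':ℝ) < m := by exact_mod_cast h1
    linarith
  have hNn : (0:ℝ) < (n:ℝ) - n' := by
    have : (n':ℝ) < n := by exact_mod_cast h2
    linarith
  have hDpos : 0 < D := mul_pos hMm hNn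
  set S : ℝ := ∑ i ∈ Finset.Ico (m'+1) (m+1), ∑ j ∈ Finset.Ico (n'+1) (n+1), u i j with hS
  -- upper bound on S termwise
  have hhigh : S ≤ D * (u m n + δ) := by
    have hterm : ∀ i ∈ Finset.Ico (m'+1) (m+1), ∀ j ∈ Finset.Ico (n'+1) (n+1),
        u i j ≤ u m n + δ := by
      intro i hi j hj
      rw [Finset.mem_Ico] at hi hj
      have hcl := stmt14aux_corner_le u C hC n₁ hL1 hL2 m n i j (by omega) (by omega)
        (by omega) (by omega)
      have him : (i:ℝ) ≤ m := by exact_mod_cast (by omega : i ≤ m)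
      have him' : (m':ℝ) ≤ i := by exact_mod_cast (by omega : m' ≤ i)
      have hjn : (j:ℝ) ≤ n := by exact_mod_cast (by omega : j ≤ n)
      have hjn' : (n':ℝ) ≤ j := by exact_mod_cast (by omega : n' ≤ j)
      have b1 : C * ((m:ℝ)-i) / ((i:ℝ)+1) ≤ C * ((m:ℝ)-m') / ((m':ℝ)+1) :=
        div_le_div₀ (mul_nonneg hC.le (by linarith))
          (mul_le_mul_of_nonneg_left (by linarith) hC.le) (by positivity) (by linarith)
      have b2 : C * ((n:ℝ)-j) / ((j:ℝ)+1) ≤ C * ((n:ℝ)-n') / ((n':ℝ)+1) :=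
        div_le_div₀ (mul_nonneg hC.le (by linarith))
          (mul_le_mul_of_nonneg_left (by linarith) hC.le) (by positivity) (by linarith)
      rw [hδ]; linarith
    have hinner : ∀ i ∈ Finset.Ico (m'+1) (m+1),
        ∑ j ∈ Finset.Ico (n'+1) (n+1), u i j ≤ ((n:ℝ)-n') * (u m n + δ) := by
      intro i hi
      have hcn := Finset.sum_le_card_nsmul (Finset.Ico (n'+1) (n+1)) _ _ (hterm i hi)
      rw [Nat.card_Ico, nsmul_eq_mul] at hcn
      have e : ((n + 1 - (n' + 1) : ℕ) : ℝ) = (n:ℝ) - n' := by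
        rw [Nat.cast_sub (by omega)]; push_cast; ring
      rwa [e] at hcn
    have hcm := Finset.sum_le_card_nsmul (Finset.Ico (m'+1) (m+1)) _ _ hinner
    rw [Nat.card_Ico, nsmul_eq_mul] at hcm
    have e : ((m + 1 - (m' + 1) : ℕ) : ℝ) = (m:ℝ) - m' := by
      rw [Nat.cast_sub (by omega)]; push_cast; ring
    rw [e] at hcm
    calc S ≤ ((m:ℝ)-m') * (((n:ℝ)-n') * (u m n + δ)) := hcm
      _ = D * (u m n + δ) := by rw [hD]; ring
  -- lower bound on S via σ
  have hid := stmt14aux_sum_ico_eq u σ hσ m' m n' n h1.le h2.le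
  have e1 := hconv m n (le_trans hm' (by omega)) (le_trans hn' (by omega))
  have e2 := hconv m' n hm' (le_trans hn' (by omega))
  have e3 := hconv m n' (le_trans hm' (by omega)) hn'
  have e4 := hconv m' n' hm' hn'
  rw [abs_le] at e1 e2 e3 e4
  have p1 : (0:ℝ) ≤ ((m:ℝ)+1)*((n:ℝ)+1) := by positivity
  have p2 : (0:ℝ) ≤ ((m':ℝ)+1)*((n:ℝ)+1) := by positivity
  have p3 : (0:ℝ) ≤ ((m:ℝ)+1)*((n':ℝ)+1) := by positivity
  have p4 : (0:ℝ) ≤ ((m':ℝ)+1)*((n':ℝ)+1) := by positivity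
  have q1 : ((m:ℝ)+1)*((n:ℝ)+1) * (-(σ m n - ℓ)) ≤ ((m:ℝ)+1)*((n:ℝ)+1) * ε' :=
    mul_le_mul_of_nonneg_left (by linarith [e1.1]) p1
  have q2 : ((m':ℝ)+1)*((n:ℝ)+1) * (σ m' n - ℓ) ≤ ((m':ℝ)+1)*((n:ℝ)+1) * ε' :=
    mul_le_mul_of_nonneg_left e2.2 p2
  have q3 : ((m:ℝ)+1)*((n':ℝ)+1) * (σ m n' - ℓ) ≤ ((m:ℝ)+1)*((n':ℝ)+1) * ε' :=
    mul_le_mul_of_nonneg_left e3.2 p3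
  have q4 : ((m':ℝ)+1)*((n':ℝ)+1) * (-(σ m' n' - ℓ)) ≤ ((m':ℝ)+1)*((n':ℝ)+1) * ε' :=
    mul_le_mul_of_nonneg_left (by linarith [e4.1]) p4
  have expand : D * ℓ - S
      = ((m:ℝ)+1)*((n:ℝ)+1) * (-(σ m n - ℓ)) + ((m':ℝ)+1)*((n:ℝ)+1) * (σ m' n - ℓ)
        + ((m:ℝ)+1)*((n':ℝ)+1) * (σ m n' - ℓ) + ((m':ℝ)+1)*((n':ℝ)+1) * (-(σ m' n' - ℓ)) := by
    rw [hS, hid, hD]; ring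
  have expand2 : ε' * K
      = ((m:ℝ)+1)*((n:ℝ)+1) * ε' + ((m':ℝ)+1)*((n:ℝ)+1) * ε'
        + ((m:ℝ)+1)*((n':ℝ)+1) * ε' + ((m':ℝ)+1)*((n':ℝ)+1) * ε' := by
    rw [hK]; ring
  have hdown : D * ℓ - ε' * K ≤ S := by linarith
  have hfin : D * (ℓ - u m n - δ) ≤ ε' * K := by
    have hr : D * (ℓ - u m n - δ) = D * ℓ - D * (u m n + δ) := by ring
    linarith [hhigh, hdown, hr.le, hr.ge]
  have hdiv : ℓ - u m n - δ ≤ ε' * K / D := by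
    rw [le_div_iff₀ hDpos]
    calc (ℓ - u m n - δ) * D = D * (ℓ - u m n - δ) := by ring
      _ ≤ ε' * K := hfin
  linarith

lemma stmt14aux_bnd_up (ε C : ℝ) (hC : 0 < C) (hε : 0 < ε) (r m k : ℕ)
    (hrC : 24*C ≤ (r:ℝ)*ε) (hrm : r ≤ m) (h2 : r * k ≤ m + r) :
    C * (k:ℝ) / ((m:ℝ)+1) ≤ ε/12 := by
  have hr : (0:ℝ) < (r:ℝ) := by nlinarith
  have h2r : (r:ℝ)*(k:ℝ) ≤ (m:ℝ)+(r:ℝ) := by exact_mod_cast h2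
  have hrm' : (r:ℝ) ≤ m := by exact_mod_cast hrm
  rw [div_le_div_iff₀ (by positivity) (by norm_num : (0:ℝ) < 12)]
  have P1 : C*((r:ℝ)*k) ≤ C*((m:ℝ)+r) := mul_le_mul_of_nonneg_left h2r hC.le
  have P2 : C*(r:ℝ) ≤ C*(m:ℝ) := mul_le_mul_of_nonneg_left hrm' hC.le
  have P3 : 24*C*((m:ℝ)+1) ≤ (r:ℝ)*ε*((m:ℝ)+1) :=
    mul_le_mul_of_nonneg_right hrC (by positivity)
  nlinarith [P1, P2, P3, hr]

lemma stmt14aux_bnd_low (ε C : ℝ) (hC : 0 < C) (hε : 0 < ε) (r m k : ℕ)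
    (hrC : 24*C ≤ (r:ℝ)*ε) (hrm : r ≤ m) (hr2 : 2 ≤ r) (hk1 : 1 ≤ k)
    (h2 : r * k ≤ m + r) (hkm : k ≤ m) :
    C * (k:ℝ) / ((m:ℝ)-(k:ℝ)+1) ≤ ε/6 := by
  have hr : (0:ℝ) < (r:ℝ) := by
    have : (2:ℝ) ≤ (r:ℝ) := by exact_mod_cast hr2
    linarith
  have h2r : (r:ℝ)*(k:ℝ) ≤ (m:ℝ)+(r:ℝ) := by exact_mod_cast h2
  have hrm' : (r:ℝ) ≤ m := by exact_mod_cast hrm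
  have hr2' : (2:ℝ) ≤ (r:ℝ) := by exact_mod_cast hr2
  have hk1' : (1:ℝ) ≤ (k:ℝ) := by exact_mod_cast hk1
  have hkm' : (k:ℝ) ≤ m := by exact_mod_cast hkm
  have h2k : 2*(k:ℝ) ≤ (m:ℝ) + 2 := by nlinarith [mul_nonneg (by linarith : (0:ℝ) ≤ (r:ℝ)-2) (by linarith : (0:ℝ) ≤ (k:ℝ)-1)]
  have hd : (0:ℝ) < (m:ℝ)-(k:ℝ)+1 := by linarith
  rw [div_le_div_iff₀ hd (by norm_num : (0:ℝ) < 6)]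
  have P1 : C*((r:ℝ)*k) ≤ C*((m:ℝ)+r) := mul_le_mul_of_nonneg_left h2r hC.le
  have P2 : C*(r:ℝ) ≤ C*(m:ℝ) := mul_le_mul_of_nonneg_left hrm' hC.le
  have P3 : 24*C*((m:ℝ)-k+1) ≤ (r:ℝ)*ε*((m:ℝ)-k+1) :=
    mul_le_mul_of_nonneg_right hrC hd.le
  have P4 : 12*C*(m:ℝ) ≤ 12*C*(2*((m:ℝ)-k+1)) :=
    mul_le_mul_of_nonneg_left (by linarith) (by positivity)
  nlinarith [P1, P2, P3, P4, hr]

lemma stmt14aux_bndK_up (r m n k k' : ℕ)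
    (h1 : (m:ℝ)+1 ≤ (r:ℝ)*k) (h1' : (n:ℝ)+1 ≤ (r:ℝ)*k')
    (hk : (k:ℝ) ≤ (m:ℝ)+1) (hk' : (k':ℝ) ≤ (n:ℝ)+1) :
    ((m:ℝ)+(k:ℝ)+1+((m:ℝ)+1)) * ((n:ℝ)+(k':ℝ)+1+((n:ℝ)+1))
      ≤ 36*(r:ℝ)^2*((k:ℝ)*(k':ℝ)) := by
  have fa : (m:ℝ)+(k:ℝ)+1+((m:ℝ)+1) ≤ 3*((r:ℝ)*k) := by linarith
  have fb : (n:ℝ)+(k':ℝ)+1+((n:ℝ)+1) ≤ 3*((r:ℝ)*k') := by linarith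
  have pa : (0:ℝ) ≤ (m:ℝ)+(k:ℝ)+1+((m:ℝ)+1) := by positivity
  have pb : (0:ℝ) ≤ (n:ℝ)+(k':ℝ)+1+((n:ℝ)+1) := by positivity
  have := mul_le_mul fa fb pb (by positivity)
  nlinarith [this, mul_nonneg (mul_nonneg (sq_nonneg (r:ℝ)) (Nat.cast_nonneg k)) (Nat.cast_nonneg k')]

lemma stmt14aux_bndK_low (r m n k k' : ℕ)
    (h1 : (m:ℝ)+1 ≤ (r:ℝ)*k) (h1' : (n:ℝ)+1 ≤ (r:ℝ)*k')
    (hk : (0:ℝ) ≤ (k:ℝ)) (hk' : (0:ℝ) ≤ (k':ℝ))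
    (hkm : (k:ℝ) ≤ (m:ℝ)) (hkn : (k':ℝ) ≤ (n:ℝ)) :
    (((m:ℝ)+1)+((m:ℝ)-(k:ℝ)+1)) * (((n:ℝ)+1)+((n:ℝ)-(k':ℝ)+1))
      ≤ 36*(r:ℝ)^2*((k:ℝ)*(k':ℝ)) := by
  have fa : ((m:ℝ)+1)+((m:ℝ)-(k:ℝ)+1) ≤ 2*((r:ℝ)*k) := by linarith
  have fb : ((n:ℝ)+1)+((n:ℝ)-(k':ℝ)+1) ≤ 2*((r:ℝ)*k') := by linarith
  have pa : (0:ℝ) ≤ ((m:ℝ)+1)+((m:ℝ)-(k:ℝ)+1) := by linarith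
  have pb : (0:ℝ) ≤ ((n:ℝ)+1)+((n:ℝ)-(k':ℝ)+1) := by linarith
  have := mul_le_mul fa fb pb (by positivity)
  nlinarith [this, mul_nonneg (mul_nonneg (sq_nonneg (r:ℝ)) hk) hk']

lemma stmt14aux_bnd2core (ε D K R : ℝ) (hε : 0 < ε) (hD : 0 < D) (hR : 0 < R)
    (hKD : K ≤ 36*R*D) : (ε/(108*R)) * K / D ≤ ε/3 := by
  rw [div_le_iff₀ hD]
  have h1 : (ε/(108*R)) * K ≤ (ε/(108*R)) * (36*R*D) :=
    mul_le_mul_of_nonneg_left hKD (by positivity)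
  have h2 : (ε/(108*R)) * (36*R*D) = ε/3 * D := by
    field_simp
    ring
  linarith

lemma stmt14aux_natfacts (r m : ℕ) (hr2 : 2 ≤ r) :
    m + 1 ≤ r * (m / r + 1) ∧ r * (m / r + 1) ≤ m + r ∧ m / r + 1 ≤ m / 2 + 1 := by
  refine ⟨?_, ?_, ?_⟩
  · have h := Nat.div_add_mod m r
    have h2 : m % r < r := Nat.mod_lt _ (by omega)
    calc m + 1 = r * (m/r) + (m % r + 1) := by rw [← Nat.add_assoc, h]
      _ ≤ r * (m/r) + r := Nat.add_le_add_left (by omega) _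
      _ = r * (m/r + 1) := (Nat.mul_succ r (m/r)).symm
  · calc r * (m/r + 1) = m/r * r + r := by rw [Nat.mul_succ]; ring
      _ ≤ m + r := Nat.add_le_add_right (Nat.div_mul_le_self m r) r
  · exact Nat.succ_le_succ (Nat.div_le_div_left hr2 (by norm_num))


lemma stmt14aux_tauberian (u : ℕ → ℕ → ℝ) (σ : ℕ → ℕ → ℝ) (ℓ : ℝ)
    (hσ : ∀ m n : ℕ, σ m n =
      (∑ i ∈ Finset.range (m + 1), ∑ j ∈ Finset.range (n + 1), u i j)
        / (((m : ℝ) + 1) * ((n : ℝ) + 1)))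
    (C : ℝ) (hC : 0 < C) (n₁ : ℕ)
    (hL1 : ∀ m n : ℕ, n₁ ≤ m → n₁ ≤ n → (m : ℝ) * (u m n - u (m - 1) n) ≥ -C)
    (hL2 : ∀ m n : ℕ, n₁ ≤ m → n₁ ≤ n → (n : ℝ) * (u m n - u m (n - 1)) ≥ -C)
    (hσconv : ∀ ε > (0 : ℝ), ∃ n₀ : ℕ, ∀ m n : ℕ, n₀ ≤ m → n₀ ≤ n → |σ m n - ℓ| < ε) :
    ∀ ε > (0 : ℝ), ∃ n₀ : ℕ, ∀ m n : ℕ, n₀ ≤ m → n₀ ≤ n → |u m n - ℓ| < ε := by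
  intro ε hε
  obtain ⟨r, hr2, hrC⟩ : ∃ r : ℕ, 2 ≤ r ∧ 24*C ≤ (r:ℝ)*ε := by
    refine ⟨max 2 (Nat.ceil (24*C/ε)), le_max_left _ _, ?_⟩
    have h1 : 24*C/ε ≤ (Nat.ceil (24*C/ε) : ℝ) := Nat.le_ceil _
    have h2 : (Nat.ceil (24*C/ε) : ℝ) ≤ ((max 2 (Nat.ceil (24*C/ε)) : ℕ):ℝ) := by
      exact_mod_cast le_max_right 2 (Nat.ceil (24*C/ε))
    have h3 := le_trans h1 h2
    rw [div_le_iff₀ hε] at h3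
    linarith
  have hrpos : (0:ℝ) < (r:ℝ) := by
    have : (2:ℝ) ≤ (r:ℝ) := by exact_mod_cast hr2
    linarith
  obtain ⟨ε', hε'def, hε'pos⟩ : ∃ ε' : ℝ, ε' = ε/(108*(r:ℝ)^2) ∧ 0 < ε' :=
    ⟨_, rfl, by positivity⟩
  obtain ⟨n₀', hn₀'⟩ := hσconv ε' hε'pos
  have hconv' : ∀ p q : ℕ, n₀' ≤ p → n₀' ≤ q → |σ p q - ℓ| ≤ ε' :=
    fun p q hp hq => (hn₀' p q hp hq).le
  refine ⟨2*(n₁+n₀'+r)+4, ?_⟩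
  intro m n hm hn
  obtain ⟨k, hk1, fm1, fm2, hkm, hmk⟩ :
      ∃ k : ℕ, 1 ≤ k ∧ m+1 ≤ r*k ∧ r*k ≤ m+r ∧ k ≤ m ∧ n₁+n₀'+r+1 ≤ m-k := by
    obtain ⟨a1, a2, a3⟩ := stmt14aux_natfacts r m hr2
    refine ⟨m/r+1, Nat.succ_le_succ (Nat.zero_le _), a1, a2, le_trans a3 (by omega), ?_⟩
    have h4 := Nat.sub_le_sub_left a3 m
    have h5 : n₁+n₀'+r+1 ≤ m - (m/2+1) := by omega
    exact le_trans h5 h4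
  obtain ⟨k', hk1', fn1, fn2, hkn, hnk⟩ :
      ∃ k : ℕ, 1 ≤ k ∧ n+1 ≤ r*k ∧ r*k ≤ n+r ∧ k ≤ n ∧ n₁+n₀'+r+1 ≤ n-k := by
    obtain ⟨a1, a2, a3⟩ := stmt14aux_natfacts r n hr2
    refine ⟨n/r+1, Nat.succ_le_succ (Nat.zero_le _), a1, a2, le_trans a3 (by omega), ?_⟩
    have h4 := Nat.sub_le_sub_left a3 n
    have h5 : n₁+n₀'+r+1 ≤ n - (n/2+1) := by omega
    exact le_trans h5 h4
  have Fm1 : (m:ℝ)+1 ≤ (r:ℝ)*(k:ℝ) := by exact_mod_cast fm1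
  have Fn1 : (n:ℝ)+1 ≤ (r:ℝ)*(k':ℝ) := by exact_mod_cast fn1
  have hrm : r ≤ m := by omega
  have hrn : r ≤ n := by omega
  have hDpos : (0:ℝ) < (k:ℝ)*(k':ℝ) := by
    have h1 : (0:ℝ) < (k:ℝ) := by exact_mod_cast hk1
    have h2 : (0:ℝ) < (k':ℝ) := by exact_mod_cast hk1'
    positivity
  -- upper estimate
  have hupper := stmt14aux_upper_est u σ ℓ hσ C hC n₁ hL1 hL2 ε' hε'pos.le n₀' hconv'
    m n (m+k) (n+k') (by omega) (by omega) (by omega) (by omega) (by omega) (by omega)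
  push_cast at hupper
  simp only [add_sub_cancel_left] at hupper
  have bu1 : C * (k:ℝ) / ((m:ℝ)+1) ≤ ε/12 := stmt14aux_bnd_up ε C hC hε r m k hrC hrm fm2
  have bu2 : C * (k':ℝ) / ((n:ℝ)+1) ≤ ε/12 := stmt14aux_bnd_up ε C hC hε r n k' hrC hrn fn2
  have bu3 : ε' * (((m:ℝ)+(k:ℝ)+1+((m:ℝ)+1)) * ((n:ℝ)+(k':ℝ)+1+((n:ℝ)+1)))
      / ((k:ℝ)*(k':ℝ)) ≤ ε/3 := by
    rw [hε'def]
    exact stmt14aux_bnd2core ε ((k:ℝ)*(k':ℝ)) _ ((r:ℝ)^2) hε hDpos (by positivity)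
      (stmt14aux_bndK_up r m n k k' Fm1 Fn1
        (by exact_mod_cast le_trans hkm (Nat.le_succ m))
        (by exact_mod_cast le_trans hkn (Nat.le_succ n)))
  have hup : u m n ≤ ℓ + ε/3 + (ε/12 + ε/12) := by linarith
  -- lower estimate
  have hlower := stmt14aux_lower_est u σ ℓ hσ C hC n₁ hL1 hL2 ε' hε'pos.le n₀' hconv'
    (m-k) (n-k') m n (by omega) (by omega) (by omega) (by omega) (by omega) (by omega)
  have ekm : ((m-k:ℕ):ℝ) = (m:ℝ)-(k:ℝ) := by
    rw [Nat.cast_sub hkm]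
  have ekn : ((n-k':ℕ):ℝ) = (n:ℝ)-(k':ℝ) := by
    rw [Nat.cast_sub hkn]
  rw [ekm, ekn] at hlower
  simp only [sub_sub_cancel] at hlower
  have bl1 : C * (k:ℝ) / ((m:ℝ)-(k:ℝ)+1) ≤ ε/6 :=
    stmt14aux_bnd_low ε C hC hε r m k hrC hrm hr2 hk1 fm2 hkm
  have bl2 : C * (k':ℝ) / ((n:ℝ)-(k':ℝ)+1) ≤ ε/6 :=
    stmt14aux_bnd_low ε C hC hε r n k' hrC hrn hr2 hk1' fn2 hkn
  have bl3 : ε' * ((((m:ℝ)+1)+((m:ℝ)-(k:ℝ)+1)) * (((n:ℝ)+1)+((n:ℝ)-(k':ℝ)+1)))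
      / ((k:ℝ)*(k':ℝ)) ≤ ε/3 := by
    rw [hε'def]
    exact stmt14aux_bnd2core ε ((k:ℝ)*(k':ℝ)) _ ((r:ℝ)^2) hε hDpos (by positivity)
      (stmt14aux_bndK_low r m n k k' Fm1 Fn1 (by positivity) (by positivity)
        (by exact_mod_cast hkm) (by exact_mod_cast hkn))
  have hlo : ℓ - ε/3 - (ε/6 + ε/6) ≤ u m n := by linarith
  rw [abs_lt]
  constructor <;> linarith

lemma stmt14aux_sum_ite_le (s : Finset ℕ) (n₂ : ℕ) (D : ℝ) (hD : 0 ≤ D) :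
    ∑ i ∈ s, (if i < n₂ then D else 0) ≤ (n₂:ℝ) * D := by
  rw [← Finset.sum_filter]
  rw [Finset.sum_const, nsmul_eq_mul]
  have hcard : (s.filter (· < n₂)).card ≤ n₂ := by
    have hsub : s.filter (· < n₂) ⊆ Finset.range n₂ := by
      intro x hx
      rw [Finset.mem_filter] at hx
      exact Finset.mem_range.mpr hx.2
    simpa using Finset.card_le_card hsub
  exact mul_le_mul_of_nonneg_right (by exact_mod_cast hcard) hD

lemma stmt14aux_abelian (u : ℕ → ℕ → ℝ) (σ : ℕ → ℕ → ℝ) (ℓ : ℝ)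
    (hσ : ∀ m n : ℕ, σ m n =
      (∑ i ∈ Finset.range (m + 1), ∑ j ∈ Finset.range (n + 1), u i j)
        / (((m : ℝ) + 1) * ((n : ℝ) + 1)))
    (hconv : ∀ ε > (0 : ℝ), ∃ n₀ : ℕ, ∀ m n : ℕ, n₀ ≤ m → n₀ ≤ n → |u m n - ℓ| < ε)
    (B : ℝ) (hB : 0 < B) (hBb : ∀ m n : ℕ, |u m n| ≤ B) :
    ∀ ε > (0 : ℝ), ∃ n₀ : ℕ, ∀ m n : ℕ, n₀ ≤ m → n₀ ≤ n → |σ m n - ℓ| < ε := by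
  intro ε hε
  obtain ⟨D, hDdef, hD0⟩ : ∃ D : ℝ, D = B + |ℓ| ∧ 0 < D :=
    ⟨B + |ℓ|, rfl, by positivity⟩
  obtain ⟨n₂, hn₂⟩ := hconv (ε/4) (by positivity)
  obtain ⟨N₂, hN₂⟩ : ∃ N₂ : ℕ, 8*((n₂:ℝ)+1)*D ≤ ε * N₂ := by
    refine ⟨Nat.ceil (8*((n₂:ℝ)+1)*D/ε), ?_⟩
    have h1 := Nat.le_ceil (8*((n₂:ℝ)+1)*D/ε)
    rw [div_le_iff₀ hε] at h1
    linarith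
  refine ⟨max n₂ N₂, ?_⟩
  intro m n hm hn
  have hmN : (N₂:ℝ) ≤ (m:ℝ)+1 := by
    have h1 : N₂ ≤ m := le_trans (le_max_right _ _) hm
    have h2 : (N₂:ℝ) ≤ m := by exact_mod_cast h1
    linarith
  have hnN : (N₂:ℝ) ≤ (n:ℝ)+1 := by
    have h1 : N₂ ≤ n := le_trans (le_max_right _ _) hn
    have h2 : (N₂:ℝ) ≤ n := by exact_mod_cast h1
    linarith
  have hdm : (0:ℝ) < ((m:ℝ)+1)*((n:ℝ)+1) := by positivity
  -- rewrite σ - ℓ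
  have hrepr : σ m n - ℓ
      = (∑ i ∈ Finset.range (m+1), ∑ j ∈ Finset.range (n+1), (u i j - ℓ))
        / (((m:ℝ)+1)*((n:ℝ)+1)) := by
    have e : ∑ i ∈ Finset.range (m+1), ∑ j ∈ Finset.range (n+1), (u i j - ℓ)
        = (∑ i ∈ Finset.range (m+1), ∑ j ∈ Finset.range (n+1), u i j)
          - (((m:ℝ)+1)*((n:ℝ)+1))*ℓ := by
      rw [Finset.sum_congr rfl (fun i _ => Finset.sum_sub_distrib _ _),
        Finset.sum_sub_distrib]
      simp [Finset.sum_const, Finset.card_range]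
      push_cast
      ring
    rw [e, hσ]
    field_simp
  -- termwise bound
  have hterm : ∀ i j : ℕ, |u i j - ℓ|
      ≤ ε/4 + ((if i < n₂ then D else 0) + (if j < n₂ then D else 0)) := by
    intro i j
    have htriv : |u i j - ℓ| ≤ D := by
      have h1 := hBb i j
      rw [hDdef]
      calc |u i j - ℓ| = |u i j + -ℓ| := by rw [sub_eq_add_neg]
        _ ≤ |u i j| + |-ℓ| := abs_add_le _ _
        _ = |u i j| + |ℓ| := by rw [abs_neg]
        _ ≤ B + |ℓ| := by linarith
    by_cases h1 : i < n₂
    · simp only [if_pos h1]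
      have h3 : (0:ℝ) ≤ if j < n₂ then D else 0 := by
        split_ifs
        · exact hD0.le
        · exact le_refl 0
      linarith
    · by_cases h2 : j < n₂
      · simp only [if_neg h1, if_pos h2]
        linarith
      · simp only [if_neg h1, if_neg h2]
        have h4 := (hn₂ i j (by omega) (by omega)).le
        linarith
  -- sum bound
  have hsum : ∑ i ∈ Finset.range (m+1), ∑ j ∈ Finset.range (n+1), |u i j - ℓ|
      ≤ ((m:ℝ)+1)*((n:ℝ)+1)*(ε/4) + (((n:ℝ)+1)*((n₂:ℝ)*D) + ((m:ℝ)+1)*((n₂:ℝ)*D)) := by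
    have step1 : ∑ i ∈ Finset.range (m+1), ∑ j ∈ Finset.range (n+1), |u i j - ℓ|
        ≤ ∑ i ∈ Finset.range (m+1), ∑ j ∈ Finset.range (n+1),
            (ε/4 + ((if i < n₂ then D else 0) + (if j < n₂ then D else 0))) :=
      Finset.sum_le_sum (fun i _ => Finset.sum_le_sum (fun j _ => hterm i j))
    refine le_trans step1 ?_
    have inner : ∀ i : ℕ, ∑ j ∈ Finset.range (n+1),
        (ε/4 + ((if i < n₂ then D else 0) + (if j < n₂ then D else 0)))
        ≤ ((n:ℝ)+1)*(ε/4) + (((n:ℝ)+1)*(if i < n₂ then D else 0) + (n₂:ℝ)*D) := by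
      intro i
      rw [Finset.sum_add_distrib, Finset.sum_add_distrib,
        Finset.sum_const, Finset.sum_const, Finset.card_range]
      have hj := stmt14aux_sum_ite_le (Finset.range (n+1)) n₂ D hD0.le
      push_cast [nsmul_eq_mul]
      linarith
    refine le_trans (Finset.sum_le_sum (fun i _ => inner i)) ?_
    rw [Finset.sum_add_distrib, Finset.sum_add_distrib,
      Finset.sum_const, Finset.sum_const, Finset.card_range]
    have hi2 : ∑ i ∈ Finset.range (m+1), ((n:ℝ)+1)*(if i < n₂ then D else 0)
        ≤ ((n:ℝ)+1)*((n₂:ℝ)*D) := by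
      rw [← Finset.mul_sum]
      exact mul_le_mul_of_nonneg_left (stmt14aux_sum_ite_le _ _ _ hD0.le) (by positivity)
    push_cast [nsmul_eq_mul]
    nlinarith [hi2]
  -- conclude
  have habs0 : |∑ i ∈ Finset.range (m+1), ∑ j ∈ Finset.range (n+1), (u i j - ℓ)|
      ≤ ∑ i ∈ Finset.range (m+1), ∑ j ∈ Finset.range (n+1), |u i j - ℓ| :=
    (Finset.abs_sum_le_sum_abs _ _).trans
      (Finset.sum_le_sum fun i _ => Finset.abs_sum_le_sum_abs _ _)
  have habs : |σ m n - ℓ|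
      ≤ (((m:ℝ)+1)*((n:ℝ)+1)*(ε/4) + (((n:ℝ)+1)*((n₂:ℝ)*D) + ((m:ℝ)+1)*((n₂:ℝ)*D)))
        / (((m:ℝ)+1)*((n:ℝ)+1)) := by
    rw [hrepr, abs_div, abs_of_pos hdm]
    exact (div_le_div_iff_of_pos_right hdm).mpr (le_trans habs0 hsum)
  have heq : (((m:ℝ)+1)*((n:ℝ)+1)*(ε/4) + (((n:ℝ)+1)*((n₂:ℝ)*D) + ((m:ℝ)+1)*((n₂:ℝ)*D)))
        / (((m:ℝ)+1)*((n:ℝ)+1))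
      = ε/4 + ((n₂:ℝ)*D/((m:ℝ)+1) + (n₂:ℝ)*D/((n:ℝ)+1)) := by
    field_simp
  have hεN : ∀ x : ℝ, 0 < x → (N₂:ℝ) ≤ x → (n₂:ℝ)*D/x ≤ ε/8 := by
    intro x hxpos hx
    rw [div_le_iff₀ hxpos]
    have h1 : ε * (N₂:ℝ) ≤ ε * x := mul_le_mul_of_nonneg_left hx hε.le
    have h2 : (n₂:ℝ)*D ≤ ((n₂:ℝ)+1)*D := by nlinarith [Nat.cast_nonneg (α := ℝ) n₂]
    nlinarith [hN₂, h1, h2]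
  have b1 := hεN _ (by positivity) hmN
  have b2 := hεN _ (by positivity) hnN
  calc |σ m n - ℓ| ≤ _ := habs
    _ = ε/4 + ((n₂:ℝ)*D/((m:ℝ)+1) + (n₂:ℝ)*D/((n:ℝ)+1)) := heq
    _ ≤ ε/4 + (ε/8 + ε/8) := by linarith
    _ < ε := by linarith


/-- Cesàro (C,1,1) specialization: under the one-sided Landau conditions, Pringsheim
convergence of a bounded double sequence implies Pringsheim convergence of its (C,1,1)
means to the same limit, and conversely Pringsheim convergence of the means implies
Pringsheim convergence of the sequence. -/
theorem stmt14 (u : ℕ → ℕ → ℝ) (ℓ : ℝ)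
    (σ : ℕ → ℕ → ℝ)
    (hσ : ∀ m n : ℕ, σ m n =
      (∑ i ∈ Finset.range (m + 1), ∑ j ∈ Finset.range (n + 1), u i j)
        / (((m : ℝ) + 1) * ((n : ℝ) + 1)))
    (M : ℝ) (hM : 0 < M)
    (hLandau : ∃ n₁ : ℕ, ∀ m n : ℕ, n₁ ≤ m → n₁ ≤ n →
      (m : ℝ) * (u m n - u (m - 1) n) ≥ -M ∧
      (n : ℝ) * (u m n - u m (n - 1)) ≥ -M) :
    (((∀ ε > (0 : ℝ), ∃ n₀ : ℕ, ∀ m n : ℕ, n₀ ≤ m → n₀ ≤ n → |u m n - ℓ| < ε) ∧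
        ∃ B > (0 : ℝ), ∀ m n : ℕ, |u m n| ≤ B) →
      (∀ ε > (0 : ℝ), ∃ n₀ : ℕ, ∀ m n : ℕ, n₀ ≤ m → n₀ ≤ n → |σ m n - ℓ| < ε)) ∧
    ((∀ ε > (0 : ℝ), ∃ n₀ : ℕ, ∀ m n : ℕ, n₀ ≤ m → n₀ ≤ n → |σ m n - ℓ| < ε) →
      (∀ ε > (0 : ℝ), ∃ n₀ : ℕ, ∀ m n : ℕ, n₀ ≤ m → n₀ ≤ n → |u m n - ℓ| < ε)) := by
  obtain ⟨n₁, hL⟩ := hLandau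
  constructor
  · rintro ⟨hconv, B, hB, hBb⟩
    exact stmt14aux_abelian u σ ℓ hσ hconv B hB hBb
  · intro hσconv
    exact stmt14aux_tauberian u σ ℓ hσ M hM n₁
      (fun m n hm hn => (hL m n hm hn).1) (fun m n hm hn => (hL m n hm hn).2) hσconv
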